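/- In the additive-kernel setting, for any x, y ∈ 𝒵 the geodesic distance in ℳ between φ(x) and φ(y) equals ‖ψ(x) − ψ(y)‖, i.e. the Euclidean distance between x and y after their coordinatewise monotone transformation by ψ. -/

import Mathlib

set_option maxHeartbeats 1000000


open Set
open scoped ENNReal BigOperators

noncomputable section

/-- The real Hilbert space ℓ² of square-summable real sequences. -/
abbrev l2 : Type := lp (fun _ : ℕ => ℝ) 2

/-- A partition `0 = t₀ ≤ t₁ ≤ … ≤ t_n = 1` of `[0,1]`. -/
structure PathPartition where
  n : ℕ
  t : ℕ → ℝ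
  first : t 0 = 0
  last : t n = 1
  mono : ∀ k, k < n → t k ≤ t (k + 1)

/-- The set of points of a partition. -/
def PathPartition.points (P : PathPartition) : Set ℝ := {x | ∃ k ≤ P.n, P.t k = x}

/-- `χ(γ, 𝒫) = ∑ₖ ‖γ_{t_k} − γ_{t_{k−1}}‖`. -/
def chiSum {E : Type*} [NormedAddCommGroup E] (γ : ℝ → E) (P : PathPartition) : ℝ :=
  ∑ k ∈ Finset.range P.n, ‖γ (P.t (k + 1)) - γ (P.t k)‖

/-- The length of a path: the supremum over all partitions of `χ(γ, 𝒫)`. -/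
def pathLength {E : Type*} [NormedAddCommGroup E] (γ : ℝ → E) : ℝ≥0∞ :=
  ⨆ P : PathPartition, ENNReal.ofReal (chiSum γ P)

/-- A path in `S` with end-points `a, b`: a continuous map `γ : [0,1] → S`
with `γ 0 = a` and `γ 1 = b`. -/
def IsPathIn {E : Type*} [NormedAddCommGroup E] (S : Set E) (a b : E) (γ : ℝ → E) : Prop :=
  ContinuousOn γ (Icc 0 1) ∧ (∀ t ∈ Icc (0:ℝ) 1, γ t ∈ S) ∧ γ 0 = a ∧ γ 1 = b

/-- Geodesic distance in `S`: the infimum of path-lengths over paths in `S` joining `a, b`. -/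
def geodesicDist {E : Type*} [NormedAddCommGroup E] (S : Set E) (a b : E) : ℝ≥0∞ :=
  ⨅ γ : {γ : ℝ → E // IsPathIn S a b γ}, pathLength γ.val

/-- The mixed second partial derivative `∂²F/∂x∂y` evaluated at `(z, z)`. -/
def mixedPartial (F : ℝ → ℝ → ℝ) (z : ℝ) : ℝ :=
  deriv (fun y : ℝ => deriv (fun x : ℝ => F x y) z) z

/-- The coordinatewise monotone transformation
`ψ_i(x^{(i)}) = α_i^{1/2} ∫_{c_i⁻}^{x^{(i)}} (∂²f_i/∂x∂y |_{(ξ,ξ)})^{1/2} dξ`. -/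
def psiMap {d : ℕ} (α : Fin d → ℝ) (fi : Fin d → ℝ → ℝ → ℝ) (cl : Fin d → ℝ)
    (x : EuclideanSpace ℝ (Fin d)) : EuclideanSpace ℝ (Fin d) :=
  WithLp.toLp 2 (fun i => Real.sqrt (α i) * ∫ ξ in (cl i)..(x i), Real.sqrt (mixedPartial (fi i) ξ))


open intervalIntegral

namespace AKG


def P1 (F : ℝ → ℝ → ℝ) : ℝ × ℝ → ℝ :=
  fun p => fderiv ℝ (fun q : ℝ × ℝ => F q.1 q.2) p (1, 0)

def D2 (F : ℝ → ℝ → ℝ) : ℝ × ℝ → ℝ := fun p => fderiv ℝ (P1 F) p (0, 1)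

variable {F : ℝ → ℝ → ℝ} (hF : ContDiff ℝ 2 (fun p : ℝ × ℝ => F p.1 p.2))
include hF

lemma hasDerivAt_P1 (y x : ℝ) : HasDerivAt (fun x => F x y) (P1 F (x, y)) x := by
  have h1 : HasFDerivAt (fun q : ℝ × ℝ => F q.1 q.2)
      (fderiv ℝ (fun q : ℝ × ℝ => F q.1 q.2) (x, y)) (x, y) :=
    (hF.differentiable (by norm_num) (x, y)).hasFDerivAt
  have h2 : HasDerivAt (fun t : ℝ => ((t, y) : ℝ × ℝ)) (1, 0) x :=
    HasDerivAt.prodMk (hasDerivAt_id x) (hasDerivAt_const x y)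
  exact h1.comp_hasDerivAt x h2

lemma contDiff_P1 : ContDiff ℝ 1 (P1 F) :=
  (hF.fderiv_right (m := 1) (by norm_num)).clm_apply contDiff_const

lemma cont_P1 : Continuous (P1 F) := (contDiff_P1 hF).continuous

lemma hasDerivAt_D2 (s t : ℝ) : HasDerivAt (fun y => P1 F (s, y)) (D2 F (s, t)) t := by
  have h1 : HasFDerivAt (P1 F) (fderiv ℝ (P1 F) (s, t)) (s, t) :=
    ((contDiff_P1 hF).differentiable (by norm_num) (s, t)).hasFDerivAt
  have h2 : HasDerivAt (fun τ : ℝ => ((s, τ) : ℝ × ℝ)) (0, 1) t :=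
    HasDerivAt.prodMk (hasDerivAt_const t s) (hasDerivAt_id t)
  exact h1.comp_hasDerivAt t h2

lemma cont_D2 : Continuous (D2 F) :=
  ((contDiff_P1 hF).continuous_fderiv (by norm_num)).clm_apply continuous_const

lemma mixedPartial_eq (z : ℝ) : mixedPartial F z = D2 F (z, z) := by
  unfold mixedPartial
  have h : (fun y => deriv (fun x : ℝ => F x y) z) = fun y => P1 F (z, y) :=
    funext fun y => (hasDerivAt_P1 hF y z).deriv
  rw [h]
  exact (hasDerivAt_D2 hF z z).deriv

lemma rect_eq (a b : ℝ) :
    F a a - F a b - F b a + F b b = ∫ s in b..a, (∫ t in b..a, D2 F (s, t)) := by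
  have step1 : ∀ y, (∫ s in b..a, P1 F (s, y)) = F a y - F b y := fun y =>
    integral_eq_sub_of_hasDerivAt (fun s _ => hasDerivAt_P1 hF y s)
      (((cont_P1 hF).comp (continuous_id.prodMk continuous_const)).intervalIntegrable _ _)
  have step2 : ∀ s, (∫ t in b..a, D2 F (s, t)) = P1 F (s, a) - P1 F (s, b) := fun s =>
    integral_eq_sub_of_hasDerivAt (fun t _ => hasDerivAt_D2 hF s t)
      (((cont_D2 hF).comp (continuous_const.prodMk continuous_id)).intervalIntegrable _ _)
  have hIa : IntervalIntegrable (fun s => P1 F (s, a)) MeasureTheory.volume b a :=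
    (((cont_P1 hF).comp (continuous_id.prodMk continuous_const))).intervalIntegrable _ _
  have hIb : IntervalIntegrable (fun s => P1 F (s, b)) MeasureTheory.volume b a :=
    (((cont_P1 hF).comp (continuous_id.prodMk continuous_const))).intervalIntegrable _ _
  simp_rw [step2]
  rw [integral_sub hIa hIb, step1, step1]
  ring




variable {F : ℝ → ℝ → ℝ} {D : ℝ × ℝ → ℝ} {cm cp : ℝ}

end AKG
namespace AKG
variable {F : ℝ → ℝ → ℝ} {D : ℝ × ℝ → ℝ} {cm cp : ℝ}

/-- pointwise comparison of `D` with `√g(s)√g(t)` near the diagonal -/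
lemma near_diag (hD : Continuous D) (hc : cm ≤ cp)
    (hpos : ∀ z ∈ Icc cm cp, 0 < D (z, z)) {ε : ℝ} (hε : 0 < ε) :
    ∃ δ > 0, ∀ s ∈ Icc cm cp, ∀ t ∈ Icc cm cp, |s - t| ≤ δ →
      |D (s, t) - Real.sqrt (D (s, s)) * Real.sqrt (D (t, t))| ≤
        ε * (Real.sqrt (D (s, s)) * Real.sqrt (D (t, t))) := by
  set g : ℝ → ℝ := fun z => D (z, z) with hg
  have contg : Continuous g := hD.comp (continuous_id.prodMk continuous_id)
  obtain ⟨z0, hz0, hz0min'⟩ := isCompact_Icc.exists_isMinOn (nonempty_Icc.2 hc)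
    contg.continuousOn
  have hz0min : ∀ z ∈ Icc cm cp, g z0 ≤ g z := fun z hz => hz0min' hz
  set m := g z0 with hm
  have hm0 : 0 < m := hpos z0 hz0
  have hsqrt_ge : ∀ s ∈ Icc cm cp, ∀ t ∈ Icc cm cp,
      m ≤ Real.sqrt (g s) * Real.sqrt (g t) := by
    intro s hs t ht
    have h1 : Real.sqrt m ≤ Real.sqrt (g s) := Real.sqrt_le_sqrt (hz0min s hs)
    have h2 : Real.sqrt m ≤ Real.sqrt (g t) := Real.sqrt_le_sqrt (hz0min t ht)
    calc m = Real.sqrt m * Real.sqrt m := (Real.mul_self_sqrt hm0.le).symm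
    _ ≤ Real.sqrt (g s) * Real.sqrt (g t) :=
        mul_le_mul h1 h2 (Real.sqrt_nonneg _) (Real.sqrt_nonneg _)
  set H : ℝ × ℝ → ℝ := fun p => D p - Real.sqrt (g p.1) * Real.sqrt (g p.2) with hH
  have contH : Continuous H := hD.sub
    (((contg.comp continuous_fst).sqrt).mul ((contg.comp continuous_snd).sqrt))
  have hUC : UniformContinuousOn H (Icc cm cp ×ˢ Icc cm cp) :=
    (isCompact_Icc.prod isCompact_Icc).uniformContinuousOn_of_continuous contH.continuousOn
  rw [Metric.uniformContinuousOn_iff] at hUC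
  obtain ⟨δ, hδ, hkey⟩ := hUC (ε * m) (mul_pos hε hm0)
  refine ⟨δ / 2, by positivity, fun s hs t ht hst => ?_⟩
  have hHt : H (t, t) = 0 := by
    simp only [hH]
    rw [Real.mul_self_sqrt (hpos t ht).le]
    ring
  have hdist : dist ((s, t) : ℝ × ℝ) ((t, t) : ℝ × ℝ) < δ := by
    rw [Prod.dist_eq]
    simp only [dist_self]
    rw [Real.dist_eq]
    calc max |s - t| 0 = |s - t| := max_eq_left (abs_nonneg _)
    _ ≤ δ / 2 := hst
    _ < δ := by linarith
  have := hkey (s, t) (mk_mem_prod hs ht) (t, t) (mk_mem_prod ht ht) hdist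
  rw [Real.dist_eq, hHt, sub_zero] at this
  calc |D (s, t) - Real.sqrt (g s) * Real.sqrt (g t)| = |H (s, t)| := rfl
  _ ≤ ε * m := this.le
  _ ≤ ε * (Real.sqrt (g s) * Real.sqrt (g t)) := by
      exact mul_le_mul_of_nonneg_left (hsqrt_ge s hs t ht) hε.le



variable {F : ℝ → ℝ → ℝ} {D : ℝ × ℝ → ℝ} {cm cp : ℝ}

/-- Core two-sided integral estimate for the rectangle increment. -/
lemma coord_est (hD : Continuous D) (hc : cm ≤ cp)
    (hpos : ∀ z ∈ Icc cm cp, 0 < D (z, z))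
    (hrect : ∀ a b : ℝ, F a a - F a b - F b a + F b b
      = ∫ s in b..a, (∫ t in b..a, D (s, t)))
    (hsym : ∀ a ∈ Icc cm cp, ∀ b ∈ Icc cm cp, F a b = F b a)
    {ε : ℝ} (hε : 0 < ε) :
    ∃ δ > 0, ∀ a ∈ Icc cm cp, ∀ b ∈ Icc cm cp, |a - b| ≤ δ →
      (1 - ε) * (∫ ξ in b..a, Real.sqrt (D (ξ, ξ)))^2 ≤ F a a - 2 * F a b + F b b ∧
      F a a - 2 * F a b + F b b ≤ (1 + ε) * (∫ ξ in b..a, Real.sqrt (D (ξ, ξ)))^2 := by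
  obtain ⟨δ, hδ, hnd⟩ := near_diag hD hc hpos hε
  have contsg : Continuous fun z : ℝ => Real.sqrt (D (z, z)) :=
    (hD.comp (continuous_id.prodMk continuous_id)).sqrt
  have contD1 : ∀ s : ℝ, Continuous fun t => D (s, t) := fun s =>
    hD.comp (continuous_const.prodMk continuous_id)
  have contParam : ∀ b a : ℝ, Continuous fun s => ∫ t in b..a, D (s, t) := fun b a =>
    intervalIntegral.continuous_parametric_intervalIntegral_of_continuous' (by exact hD) b a
  have core : ∀ a ∈ Icc cm cp, ∀ b ∈ Icc cm cp, b ≤ a → a - b ≤ δ →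
      (1 - ε) * (∫ ξ in b..a, Real.sqrt (D (ξ, ξ)))^2 ≤ F a a - 2 * F a b + F b b ∧
      F a a - 2 * F a b + F b b ≤ (1 + ε) * (∫ ξ in b..a, Real.sqrt (D (ξ, ξ)))^2 := by
    intro a ha b hb hba habd
    have sub : Icc b a ⊆ Icc cm cp := Icc_subset_Icc hb.1 ha.2
    set I := ∫ ξ in b..a, Real.sqrt (D (ξ, ξ)) with hI
    have hI0 : 0 ≤ I := intervalIntegral.integral_nonneg hba fun ξ _ => Real.sqrt_nonneg _
    have hrect' : F a a - 2 * F a b + F b b = ∫ s in b..a, (∫ t in b..a, D (s, t)) := by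
      rw [← hrect a b, hsym a ha b hb]; ring
    have hpt : ∀ s ∈ Icc b a, ∀ t ∈ Icc b a,
        |D (s, t) - Real.sqrt (D (s, s)) * Real.sqrt (D (t, t))| ≤
          ε * (Real.sqrt (D (s, s)) * Real.sqrt (D (t, t))) := by
      intro s hs t ht
      refine hnd s (sub hs) t (sub ht) ?_
      rw [abs_sub_le_iff]
      constructor <;> [skip; skip] <;>
        · obtain ⟨h1, h2⟩ := hs; obtain ⟨h3, h4⟩ := ht; linarith
    have inner_le : ∀ s ∈ Icc b a,
        (∫ t in b..a, D (s, t)) ≤ (1 + ε) * Real.sqrt (D (s, s)) * I := by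
      intro s hs
      have : (∫ t in b..a, ((1 + ε) * Real.sqrt (D (s, s))) * Real.sqrt (D (t, t)))
          = ((1 + ε) * Real.sqrt (D (s, s))) * I := intervalIntegral.integral_const_mul _ _
      rw [← this]
      refine intervalIntegral.integral_mono_on hba ((contD1 s).intervalIntegrable _ _)
        ((continuous_const.mul contsg).intervalIntegrable _ _) fun t ht => ?_
      have h := (abs_le.1 (hpt s hs t ht)).2
      nlinarith [Real.sqrt_nonneg (D (s,s)), Real.sqrt_nonneg (D (t,t))]
    have inner_ge : ∀ s ∈ Icc b a,
        (1 - ε) * Real.sqrt (D (s, s)) * I ≤ (∫ t in b..a, D (s, t)) := by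
      intro s hs
      have : (∫ t in b..a, ((1 - ε) * Real.sqrt (D (s, s))) * Real.sqrt (D (t, t)))
          = ((1 - ε) * Real.sqrt (D (s, s))) * I := intervalIntegral.integral_const_mul _ _
      rw [← this]
      refine intervalIntegral.integral_mono_on hba
        ((continuous_const.mul contsg).intervalIntegrable _ _)
        ((contD1 s).intervalIntegrable _ _) fun t ht => ?_
      have h := (abs_le.1 (hpt s hs t ht)).1
      nlinarith [Real.sqrt_nonneg (D (s,s)), Real.sqrt_nonneg (D (t,t))]
    constructor
    · calc (1 - ε) * I ^ 2 = ∫ s in b..a, ((1 - ε) * I) * Real.sqrt (D (s, s)) := by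
            rw [intervalIntegral.integral_const_mul]; ring
      _ = ∫ s in b..a, (1 - ε) * Real.sqrt (D (s, s)) * I := by
            congr 1; funext s; ring
      _ ≤ ∫ s in b..a, (∫ t in b..a, D (s, t)) := by
            refine intervalIntegral.integral_mono_on hba
              (((continuous_const.mul contsg).mul continuous_const).intervalIntegrable _ _)
              ((contParam b a).intervalIntegrable _ _) inner_ge
      _ = F a a - 2 * F a b + F b b := hrect'.symm
    · calc F a a - 2 * F a b + F b b = ∫ s in b..a, (∫ t in b..a, D (s, t)) := hrect'
      _ ≤ ∫ s in b..a, (1 + ε) * Real.sqrt (D (s, s)) * I := by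
            refine intervalIntegral.integral_mono_on hba
              ((contParam b a).intervalIntegrable _ _)
              (((continuous_const.mul contsg).mul continuous_const).intervalIntegrable _ _)
              inner_le
      _ = ∫ s in b..a, ((1 + ε) * I) * Real.sqrt (D (s, s)) := by
            congr 1; funext s; ring
      _ = (1 + ε) * I ^ 2 := by rw [intervalIntegral.integral_const_mul]; ring
  refine ⟨δ, hδ, fun a ha b hb hab => ?_⟩
  rcases le_total b a with hba | hab'
  · exact core a ha b hb hba (by rw [abs_sub_le_iff] at hab; exact hab.1)
  · have h := core b hb a ha hab' (by rw [abs_sub_comm] at hab; rwa [abs_of_nonneg (by linarith)] at hab)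
    have e1 : F b b - 2 * F b a + F a a = F a a - 2 * F a b + F b b := by
      rw [hsym a ha b hb]; ring
    have e2 : (∫ ξ in a..b, Real.sqrt (D (ξ, ξ)))^2 = (∫ ξ in b..a, Real.sqrt (D (ξ, ξ)))^2 := by
      rw [intervalIntegral.integral_symm]; ring
    rw [e1, e2] at h
    exact h


end AKG


theorem AKG.sum_range_mul' {M : Type*} [AddCommMonoid M] (f : ℕ → M) (a b : ℕ) :
    ∑ j ∈ Finset.range (a*b), f j = ∑ k ∈ Finset.range a, ∑ r ∈ Finset.range b, f (k*b+r) := by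
  induction a with
  | zero => simp
  | succ a ih => rw [Nat.succ_mul, Finset.sum_range_add, ih, Finset.sum_range_succ]

theorem PathPartition.mono' (P : PathPartition) : ∀ k l, k ≤ l → l ≤ P.n → P.t k ≤ P.t l := by
  intro k l hkl hln
  induction l with
  | zero => exact le_of_eq (by rw [Nat.le_zero.1 hkl])
  | succ l ih =>
      rcases Nat.eq_or_lt_of_le hkl with h | h
      · rw [h]
      · exact le_trans (ih (Nat.lt_succ_iff.1 h) (le_trans (Nat.le_succ l) hln))
          (P.mono l (Nat.lt_of_succ_le hln))

theorem PathPartition.mem_unit (P : PathPartition) {k : ℕ} (hk : k ≤ P.n) : P.t k ∈ Icc (0:ℝ) 1 := by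
  constructor
  · rw [← P.first]; exact P.mono' 0 k (Nat.zero_le _) hk
  · rw [← P.last]; exact P.mono' k P.n hk le_rfl

/-- Refinement of a partition: each interval is split into `m` equal pieces. -/
def PathPartition.refine (P : PathPartition) (m : ℕ) (hm : 0 < m) : PathPartition where
  n := P.n * m
  t := fun j => P.t (j / m) + ((j % m : ℕ) : ℝ) / m * (P.t (j / m + 1) - P.t (j / m))
  first := by simp [P.first]
  last := by simp [Nat.mul_div_cancel _ hm, Nat.mul_mod_left, P.last]
  mono := by
    intro j hj
    have hq : j / m < P.n := (Nat.div_lt_iff_lt_mul hm).2 hj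
    have hr : j % m < m := Nat.mod_lt _ hm
    have hΔ : P.t (j / m) ≤ P.t (j / m + 1) := P.mono _ hq
    have hdm := Nat.div_add_mod j m
    have hj1 : j + 1 = m * (j / m) + (j % m + 1) := by omega
    have hm' : (0:ℝ) < m := by exact_mod_cast hm
    show P.t (j / m) + ((j % m : ℕ) : ℝ) / m * (P.t (j / m + 1) - P.t (j / m))
        ≤ P.t ((j+1) / m) + (((j+1) % m : ℕ) : ℝ) / m * (P.t ((j+1) / m + 1) - P.t ((j+1) / m))
    rcases Nat.lt_or_ge (j % m + 1) m with h | h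
    · have hd : (j+1) / m = j / m := by
        rw [hj1, Nat.mul_add_div hm, Nat.div_eq_of_lt h, Nat.add_zero]
      have hmm : (j+1) % m = j % m + 1 := by
        rw [hj1, Nat.mul_add_mod, Nat.mod_eq_of_lt h]
      rw [hd, hmm]
      have hle : ((j % m : ℕ) : ℝ) / m ≤ ((j % m + 1 : ℕ) : ℝ) / m := by
        gcongr
        exact_mod_cast Nat.le_succ _
      nlinarith [sub_nonneg.2 hΔ]
    · have hroof : j % m + 1 = m := le_antisymm (Nat.succ_le_of_lt hr) h
      have hj2 : j + 1 = m * (j / m + 1) := by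
        have : m * (j / m + 1) = m * (j / m) + m := by ring
        omega
      have hd : (j+1) / m = j / m + 1 := by rw [hj2, Nat.mul_div_cancel_left _ hm]
      have hmm : (j+1) % m = 0 := by rw [hj2, Nat.mul_mod_right]
      rw [hd, hmm]
      have h1' : ((j % m : ℕ) : ℝ) / m ≤ 1 := by
        rw [div_le_one hm']; exact_mod_cast hr.le
      simp only [Nat.cast_zero, zero_div, zero_mul, add_zero]
      nlinarith [sub_nonneg.2 hΔ]

theorem PathPartition.refine_block (P : PathPartition) (m : ℕ) (hm : 0 < m) (k : ℕ) :
    (P.refine m hm).t (k * m) = P.t k := by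
  show P.t (k * m / m) + ((k * m % m : ℕ) : ℝ) / m * (P.t (k * m / m + 1) - P.t (k * m / m)) = P.t k
  rw [Nat.mul_div_cancel _ hm, Nat.mul_mod_left]
  simp

theorem PathPartition.refine_gap (P : PathPartition) (m : ℕ) (hm : 0 < m) {j : ℕ}
    (hj : j < P.n * m) :
    (P.refine m hm).t (j + 1) - (P.refine m hm).t j ≤ 1 / m := by
  have hq : j / m < P.n := (Nat.div_lt_iff_lt_mul hm).2 hj
  have hr : j % m < m := Nat.mod_lt _ hm
  have hm' : (0:ℝ) < m := by exact_mod_cast hm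
  have hΔ1 : P.t (j / m + 1) - P.t (j / m) ≤ 1 :=
    by linarith [(P.mem_unit (Nat.succ_le_of_lt hq)).2, (P.mem_unit hq.le).1]
  have hΔ0 : 0 ≤ P.t (j / m + 1) - P.t (j / m) := sub_nonneg.2 (P.mono _ hq)
  have hdm := Nat.div_add_mod j m
  have key : (P.refine m hm).t (j + 1) - (P.refine m hm).t j
      = (P.t (j / m + 1) - P.t (j / m)) / m := by
    have hj1 : j + 1 = m * (j / m) + (j % m + 1) := by omega
    show P.t ((j+1) / m) + (((j+1) % m : ℕ) : ℝ) / m * (P.t ((j+1) / m + 1) - P.t ((j+1) / m))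
        - (P.t (j / m) + ((j % m : ℕ) : ℝ) / m * (P.t (j / m + 1) - P.t (j / m)))
        = (P.t (j / m + 1) - P.t (j / m)) / m
    rcases Nat.lt_or_ge (j % m + 1) m with h | h
    · have hd : (j+1) / m = j / m := by
        rw [hj1, Nat.mul_add_div hm, Nat.div_eq_of_lt h, Nat.add_zero]
      have hmm : (j+1) % m = j % m + 1 := by
        rw [hj1, Nat.mul_add_mod, Nat.mod_eq_of_lt h]
      rw [hd, hmm]
      push_cast
      field_simp
      ring
    · have hroof : j % m + 1 = m := le_antisymm (Nat.succ_le_of_lt hr) h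
      have hj2 : j + 1 = m * (j / m + 1) := by
        have : m * (j / m + 1) = m * (j / m) + m := by ring
        omega
      have hd : (j+1) / m = j / m + 1 := by rw [hj2, Nat.mul_div_cancel_left _ hm]
      have hmm : (j+1) % m = 0 := by rw [hj2, Nat.mul_mod_right]
      rw [hd, hmm]
      have hc : ((j % m : ℕ) : ℝ) = (m : ℝ) - 1 := by
        have := congrArg (Nat.cast : ℕ → ℝ) hroof
        push_cast at this
        linarith
      rw [hc]
      field_simp
      ring
  rw [key]
  calc (P.t (j / m + 1) - P.t (j / m)) / m ≤ 1 / m := by gcongr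
    _ = 1 / m := rfl

theorem chiSum_le_refine {E : Type*} [NormedAddCommGroup E] (γ : ℝ → E) (P : PathPartition)
    (m : ℕ) (hm : 0 < m) : chiSum γ P ≤ chiSum γ (P.refine m hm) := by
  unfold chiSum
  show _ ≤ ∑ j ∈ Finset.range (P.n * m), ‖γ ((P.refine m hm).t (j+1)) - γ ((P.refine m hm).t j)‖
  rw [AKG.sum_range_mul']
  apply Finset.sum_le_sum
  intro k _
  have htel : γ (P.t (k+1)) - γ (P.t k)
      = ∑ r ∈ Finset.range m,
        (γ ((P.refine m hm).t (k*m + r + 1)) - γ ((P.refine m hm).t (k*m + r))) := by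
    simp only [add_assoc]
    rw [Finset.sum_range_sub (fun r => γ ((P.refine m hm).t (k*m + r))) m]
    have e1 : k*m + m = (k+1)*m := by ring
    simp only [Nat.add_zero]
    rw [e1, PathPartition.refine_block, PathPartition.refine_block]
  rw [htel]
  exact norm_sum_le _ _


namespace AKG

lemma coord_abs_le_norm {d : ℕ} (v : EuclideanSpace ℝ (Fin d)) (i : Fin d) : |v i| ≤ ‖v‖ := by
  rw [EuclideanSpace.norm_eq]
  calc |v i| = Real.sqrt (‖v i‖^2) := by rw [Real.sqrt_sq_eq_abs, Real.norm_eq_abs, abs_abs]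
  _ ≤ Real.sqrt (∑ j, ‖v j‖^2) := Real.sqrt_le_sqrt
      (Finset.single_le_sum (f := fun j => ‖v j‖^2) (fun j _ => sq_nonneg _) (Finset.mem_univ i))

lemma sqrt_aux1 {c x y : ℝ} (hx : 0 ≤ x) (hy : 0 ≤ y) (hc : 0 ≤ c) (h : x^2 ≤ c*y^2) :
    x ≤ Real.sqrt c * y := by
  have := Real.sqrt_le_sqrt h
  rwa [Real.sqrt_mul hc, Real.sqrt_sq hy, Real.sqrt_sq hx] at this

lemma sqrt_aux2 {c x y : ℝ} (hx : 0 ≤ x) (hy : 0 ≤ y) (hc : 0 ≤ c) (h : c*y^2 ≤ x^2) :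
    Real.sqrt c * y ≤ x := by
  have := Real.sqrt_le_sqrt h
  rwa [Real.sqrt_mul hc, Real.sqrt_sq hy, Real.sqrt_sq hx] at this

end AKG

/-- Proposition 3, first part. Additive kernels: for `x, y ∈ 𝒵`,
the geodesic distance in `ℳ` between `φ(x)` and `φ(y)` equals `‖ψ(x) − ψ(y)‖`. -/
theorem additive_kernel_geodesic_distance
    {d : ℕ} (hd : 1 ≤ d)
    (cl cu : Fin d → ℝ) (hcl : ∀ i, cl i ≤ cu i)
    (Z : Set (EuclideanSpace ℝ (Fin d)))
    (hZdef : Z = {x | ∀ i, x i ∈ Icc (cl i) (cu i)})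
    (α : Fin d → ℝ) (hα : ∀ i, 0 < α i)
    (fi : Fin d → ℝ → ℝ → ℝ)
    (hfiC2 : ∀ i, ContDiff ℝ 2 (fun p : ℝ × ℝ => fi i p.1 p.2))
    (hfipos : ∀ i, ∀ z ∈ Icc (cl i) (cu i), 0 < mixedPartial (fi i) z)
    (φ : EuclideanSpace ℝ (Fin d) → l2)
    (hφ : ∀ x ∈ Z, ∀ y ∈ Z, (inner ℝ (φ x) (φ y) : ℝ) = ∑ i, α i * fi i (x i) (y i))
    -- Assumption 1
    (hA1 : ∀ x ∈ Z, ∀ y ∈ Z, x ≠ y →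
      ∃ a ∈ Z, (∑ i, α i * fi i (x i) (a i)) ≠ ∑ i, α i * fi i (y i) (a i))
    (x : EuclideanSpace ℝ (Fin d)) (hx : x ∈ Z)
    (y : EuclideanSpace ℝ (Fin d)) (hy : y ∈ Z) :
    geodesicDist (φ '' Z) (φ x) (φ y) =
      ENNReal.ofReal ‖psiMap α fi cl x - psiMap α fi cl y‖ := by
  subst hZdef
  have hD2cont : ∀ i, Continuous (AKG.D2 (fi i)) := fun i => AKG.cont_D2 (hfiC2 i)
  have hmp_eq : ∀ i (z : ℝ), mixedPartial (fi i) z = AKG.D2 (fi i) (z, z) :=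
    fun i => AKG.mixedPartial_eq (hfiC2 i)
  have hgcont : ∀ i, Continuous (fun ξ : ℝ => Real.sqrt (mixedPartial (fi i) ξ)) := by
    intro i
    have h : (fun ξ : ℝ => Real.sqrt (mixedPartial (fi i) ξ))
        = fun ξ => Real.sqrt (AKG.D2 (fi i) (ξ, ξ)) := by
      funext ξ; rw [hmp_eq]
    rw [h]
    exact ((hD2cont i).comp (continuous_id.prodMk continuous_id)).sqrt
  have hψcoordcont : ∀ i, Continuous
      (fun s : ℝ => ∫ ξ in (cl i)..s, Real.sqrt (mixedPartial (fi i) ξ)) := by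
    intro i
    exact intervalIntegral.continuous_parametric_intervalIntegral_of_continuous
      (f := fun (_ : ℝ) (t : ℝ) => Real.sqrt (mixedPartial (fi i) t))
      ((hgcont i).comp continuous_snd) continuous_id
  have hψcont : Continuous (psiMap α fi cl) := by
    have h : Continuous fun a : EuclideanSpace ℝ (Fin d) =>
        ((fun i => Real.sqrt (α i) * ∫ ξ in (cl i)..(a i),
          Real.sqrt (mixedPartial (fi i) ξ)) : ∀ _ : Fin d, ℝ) :=
      continuous_pi fun i => continuous_const.mul
        ((hψcoordcont i).comp (EuclideanSpace.proj (𝕜 := ℝ) i).continuous)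
    exact (PiLp.continuous_toLp 2 (fun _ : Fin d => ℝ)).comp h
  have hZmem : ∀ a ∈ {x : EuclideanSpace ℝ (Fin d) | ∀ i, x i ∈ Icc (cl i) (cu i)},
      ∀ i, a i ∈ Icc (cl i) (cu i) := fun a ha i => ha i
  set Z : Set (EuclideanSpace ℝ (Fin d)) :=
    {x | ∀ i, x i ∈ Icc (cl i) (cu i)} with hZdef
  have hZcompact : IsCompact Z := by
    have h : Z = (⇑(EuclideanSpace.equiv (Fin d) ℝ)) ⁻¹'
        (univ.pi fun i => Icc (cl i) (cu i)) := by
      ext a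
      constructor
      · intro h i _; exact h i
      · intro h i; exact h i (mem_univ i)
    rw [h]
    exact (EuclideanSpace.equiv (Fin d) ℝ).toHomeomorph.isCompact_preimage.2
      (isCompact_univ_pi fun i => isCompact_Icc)
  have hsymm : ∀ i, ∀ a ∈ Icc (cl i) (cu i), ∀ b ∈ Icc (cl i) (cu i),
      fi i a b = fi i b a := by
    intro i a ha b hb
    set u : EuclideanSpace ℝ (Fin d) :=
      (EuclideanSpace.equiv (Fin d) ℝ).symm (Function.update (fun j => x j) i a) with hu_def
    set v : EuclideanSpace ℝ (Fin d) :=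
      (EuclideanSpace.equiv (Fin d) ℝ).symm (Function.update (fun j => x j) i b) with hv_def
    have hu_apply : ∀ j, u j = Function.update (fun j => x j) i a j := fun j => rfl
    have hv_apply : ∀ j, v j = Function.update (fun j => x j) i b j := fun j => rfl
    have hu : u ∈ Z := by
      intro j
      rw [hu_apply, Function.update_apply]
      split
      · next h => subst h; exact ha
      · exact hx j
    have hv : v ∈ Z := by
      intro j
      rw [hv_apply, Function.update_apply]
      split
      · next h => subst h; exact hb
      · exact hx j
    have h1 := hφ u hu v hv
    have h2 := hφ v hv u hu
    have hz : ∑ j, (α j * fi j (u j) (v j) - α j * fi j (v j) (u j)) = 0 := by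
      rw [Finset.sum_sub_distrib, ← h1, ← h2, real_inner_comm]
      ring
    have hsingle : ∑ j, (α j * fi j (u j) (v j) - α j * fi j (v j) (u j))
        = α i * fi i a b - α i * fi i b a := by
      rw [Finset.sum_eq_single i]
      · rw [hu_apply, hv_apply, Function.update_self, Function.update_self]
      · intro j _ hji
        rw [hu_apply, hv_apply, Function.update_of_ne hji, Function.update_of_ne hji]
        ring
      · intro h; exact absurd (Finset.mem_univ i) h
    rw [hsingle] at hz
    have := sub_eq_zero.1 hz
    exact mul_left_cancel₀ (ne_of_gt (hα i)) this
  have hnormφ : ∀ a ∈ Z, ∀ b ∈ Z, ‖φ a - φ b‖^2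
      = ∑ i, α i * (fi i (a i) (a i) - 2 * fi i (a i) (b i) + fi i (b i) (b i)) := by
    intro a ha b hb
    calc ‖φ a - φ b‖^2
        = (inner ℝ (φ a) (φ a) : ℝ) - 2 * inner ℝ (φ a) (φ b) + inner ℝ (φ b) (φ b) := by
          rw [norm_sub_sq_real, ← real_inner_self_eq_norm_sq, ← real_inner_self_eq_norm_sq]
      _ = (∑ i, α i * fi i (a i) (a i)) - 2 * (∑ i, α i * fi i (a i) (b i))
            + ∑ i, α i * fi i (b i) (b i) := by
          rw [hφ a ha a ha, hφ a ha b hb, hφ b hb b hb]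
      _ = ∑ i, α i * (fi i (a i) (a i) - 2 * fi i (a i) (b i) + fi i (b i) (b i)) := by
          rw [Finset.mul_sum, ← Finset.sum_sub_distrib, ← Finset.sum_add_distrib]
          exact Finset.sum_congr rfl fun i _ => by ring
  have hsub_apply : ∀ (u v : EuclideanSpace ℝ (Fin d)) (j : Fin d), (u - v) j = u j - v j :=
    fun _ _ _ => rfl
  have hnormψ : ∀ a b : EuclideanSpace ℝ (Fin d), ‖psiMap α fi cl a - psiMap α fi cl b‖^2
      = ∑ i, α i * (∫ ξ in (b i)..(a i), Real.sqrt (mixedPartial (fi i) ξ))^2 := by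
    intro a b
    rw [EuclideanSpace.norm_eq, Real.sq_sqrt (Finset.sum_nonneg fun i _ => sq_nonneg _)]
    refine Finset.sum_congr rfl fun i _ => ?_
    have hdiff : (psiMap α fi cl a - psiMap α fi cl b) i
        = Real.sqrt (α i) * ∫ ξ in (b i)..(a i), Real.sqrt (mixedPartial (fi i) ξ) := by
      rw [hsub_apply]
      show Real.sqrt (α i) * (∫ ξ in (cl i)..(a i), Real.sqrt (mixedPartial (fi i) ξ))
          - Real.sqrt (α i) * (∫ ξ in (cl i)..(b i), Real.sqrt (mixedPartial (fi i) ξ)) = _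
      rw [← mul_sub, intervalIntegral.integral_interval_sub_left
        ((hgcont i).intervalIntegrable _ _) ((hgcont i).intervalIntegrable _ _)]
    rw [Real.norm_eq_abs, sq_abs, hdiff, mul_pow, Real.sq_sqrt (hα i).le]
  have hloc : ∀ ε : ℝ, 0 < ε → ∃ δ > 0, ∀ a ∈ Z, ∀ b ∈ Z, (∀ i, |a i - b i| ≤ δ) →
      Real.sqrt (1-ε) * ‖psiMap α fi cl a - psiMap α fi cl b‖ ≤ ‖φ a - φ b‖ ∧
      ‖φ a - φ b‖ ≤ Real.sqrt (1+ε) * ‖psiMap α fi cl a - psiMap α fi cl b‖ := by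
    intro ε hε
    haveI : Nonempty (Fin d) := ⟨⟨0, hd⟩⟩
    have hce : ∀ i, ∃ δ > 0, ∀ a ∈ Icc (cl i) (cu i), ∀ b ∈ Icc (cl i) (cu i), |a - b| ≤ δ →
        (1-ε) * (∫ ξ in b..a, Real.sqrt (AKG.D2 (fi i) (ξ, ξ)))^2
          ≤ fi i a a - 2 * fi i a b + fi i b b ∧
        fi i a a - 2 * fi i a b + fi i b b
          ≤ (1+ε) * (∫ ξ in b..a, Real.sqrt (AKG.D2 (fi i) (ξ, ξ)))^2 := fun i =>
      AKG.coord_est (hD2cont i) (hcl i)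
        (fun z hz => by rw [← hmp_eq]; exact hfipos i z hz)
        (AKG.rect_eq (hfiC2 i)) (hsymm i) hε
    choose δf hδf hbound using hce
    set δ : ℝ := Finset.univ.inf' Finset.univ_nonempty δf with hδdef
    have hδpos : 0 < δ := (Finset.lt_inf'_iff _).2 fun i _ => hδf i
    refine ⟨δ, hδpos, fun a ha b hb hab => ?_⟩
    have hint_eq : ∀ i, (∫ ξ in (b i)..(a i), Real.sqrt (mixedPartial (fi i) ξ))
        = ∫ ξ in (b i)..(a i), Real.sqrt (AKG.D2 (fi i) (ξ, ξ)) := fun i => by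
      simp_rw [hmp_eq]
    have hsq : ∀ i : Fin d,
        (1-ε) * (∫ ξ in (b i)..(a i), Real.sqrt (mixedPartial (fi i) ξ))^2
          ≤ fi i (a i) (a i) - 2 * fi i (a i) (b i) + fi i (b i) (b i) ∧
        fi i (a i) (a i) - 2 * fi i (a i) (b i) + fi i (b i) (b i)
          ≤ (1+ε) * (∫ ξ in (b i)..(a i), Real.sqrt (mixedPartial (fi i) ξ))^2 := by
      intro i
      rw [hint_eq i]
      exact hbound i (a i) (ha i) (b i) (hb i)
        ((hab i).trans (Finset.inf'_le _ (Finset.mem_univ i)))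
    have hup2 : ‖φ a - φ b‖^2
        ≤ (1+ε) * ‖psiMap α fi cl a - psiMap α fi cl b‖^2 := by
      rw [hnormφ a ha b hb, hnormψ a b, Finset.mul_sum]
      refine Finset.sum_le_sum fun i _ => ?_
      have h := (hsq i).2
      have := mul_le_mul_of_nonneg_left h (hα i).le
      calc α i * (fi i (a i) (a i) - 2 * fi i (a i) (b i) + fi i (b i) (b i))
          ≤ α i * ((1+ε) * (∫ ξ in (b i)..(a i), Real.sqrt (mixedPartial (fi i) ξ))^2) := this
        _ = (1+ε) * (α i * (∫ ξ in (b i)..(a i), Real.sqrt (mixedPartial (fi i) ξ))^2) := by ring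
    have hlow2 : (1-ε) * ‖psiMap α fi cl a - psiMap α fi cl b‖^2
        ≤ ‖φ a - φ b‖^2 := by
      rw [hnormφ a ha b hb, hnormψ a b, Finset.mul_sum]
      refine Finset.sum_le_sum fun i _ => ?_
      have h := (hsq i).1
      have := mul_le_mul_of_nonneg_left h (hα i).le
      calc (1-ε) * (α i * (∫ ξ in (b i)..(a i), Real.sqrt (mixedPartial (fi i) ξ))^2)
          = α i * ((1-ε) * (∫ ξ in (b i)..(a i), Real.sqrt (mixedPartial (fi i) ξ))^2) := by ring
        _ ≤ α i * (fi i (a i) (a i) - 2 * fi i (a i) (b i) + fi i (b i) (b i)) := this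
    constructor
    · rcases le_or_gt (1-ε) 0 with h | h
      · rw [Real.sqrt_eq_zero_of_nonpos h, zero_mul]
        exact norm_nonneg _
      · exact AKG.sqrt_aux2 (norm_nonneg _) (norm_nonneg _) h.le hlow2
    · exact AKG.sqrt_aux1 (norm_nonneg _) (norm_nonneg _) (by linarith) hup2
  have hφcont : ContinuousOn φ Z := by
    obtain ⟨δ, hδpos, hδ⟩ := hloc 1 one_pos
    intro a ha
    rw [Metric.continuousWithinAt_iff]
    intro ε' hε'
    obtain ⟨δψ, hδψpos, hδψ⟩ := Metric.continuous_iff.1 hψcont a (ε'/2) (by positivity)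
    refine ⟨min δ δψ, lt_min hδpos hδψpos, fun b hb hdist => ?_⟩
    have hcoord : ∀ i, |b i - a i| ≤ δ := by
      intro i
      have h1 : |b i - a i| = |(b - a) i| := by rw [hsub_apply]
      calc |b i - a i| = |(b - a) i| := h1
        _ ≤ ‖b - a‖ := AKG.coord_abs_le_norm _ i
        _ = dist b a := (dist_eq_norm b a).symm
        _ ≤ min δ δψ := hdist.le
        _ ≤ δ := min_le_left _ _
    have h2 := (hδ b hb a ha hcoord).2
    have h3 : dist (psiMap α fi cl b) (psiMap α fi cl a) < ε'/2 :=
      hδψ b (hdist.trans_le (min_le_right _ _))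
    rw [dist_eq_norm] at h3 ⊢
    have hs2 : Real.sqrt (1+1) ≤ 2 := by
      have h4 : Real.sqrt (1+1) ≤ Real.sqrt 4 := Real.sqrt_le_sqrt (by norm_num)
      rwa [show (4:ℝ) = 2^2 by norm_num, Real.sqrt_sq (by norm_num : (0:ℝ) ≤ 2)] at h4
    calc ‖φ b - φ a‖ ≤ Real.sqrt (1+1) * ‖psiMap α fi cl b - psiMap α fi cl a‖ := h2
      _ ≤ 2 * ‖psiMap α fi cl b - psiMap α fi cl a‖ :=
          mul_le_mul_of_nonneg_right hs2 (norm_nonneg _)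
      _ < 2 * (ε'/2) := by
          refine mul_lt_mul_of_pos_left ?_ (by norm_num)
          exact h3
      _ = ε' := by ring
  have hφinj : InjOn φ Z := by
    intro a ha b hb hab
    by_contra hne
    obtain ⟨w, hw, hneq⟩ := hA1 a ha b hb hne
    exact hneq (by rw [← hφ a ha w hw, ← hφ b hb w hw, hab])
  obtain ⟨c₀, hc₀cont, hc₀mem, hc₀0, hc₀1, hc₀ψ⟩ :
      ∃ c₀ : ℝ → EuclideanSpace ℝ (Fin d), Continuous c₀ ∧ (∀ t, c₀ t ∈ Z) ∧
        c₀ 0 = x ∧ c₀ 1 = y ∧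
        (∀ s ∈ Icc (0:ℝ) 1, ∀ t ∈ Icc (0:ℝ) 1,
          psiMap α fi cl (c₀ t) - psiMap α fi cl (c₀ s)
            = (t - s) • (psiMap α fi cl y - psiMap α fi cl x)) := by
    classical
    set τ : ℝ → ℝ := fun t => max 0 (min 1 t) with hτdef
    have hτcont : Continuous τ := continuous_const.max (continuous_const.min continuous_id)
    have hτmem : ∀ t, τ t ∈ Icc (0:ℝ) 1 :=
      fun t => ⟨le_max_left _ _, max_le zero_le_one (min_le_left _ _)⟩
    have hτid : ∀ t ∈ Icc (0:ℝ) 1, τ t = t := by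
      intro t ht
      rw [hτdef]
      simp only
      rw [min_eq_right ht.2, max_eq_right ht.1]
    set Fψ : Fin d → ℝ → ℝ :=
      fun i s => ∫ ξ in (cl i)..s, Real.sqrt (mixedPartial (fi i) ξ) with hFψdef
    have hFψderiv : ∀ i s, deriv (Fψ i) s = Real.sqrt (mixedPartial (fi i) s) :=
      fun i s => Continuous.deriv_integral _ (hgcont i) _ s
    have hFψmono : ∀ i, StrictMonoOn (Fψ i) (Icc (cl i) (cu i)) := by
      intro i
      refine strictMonoOn_of_deriv_pos (convex_Icc _ _) (hψcoordcont i).continuousOn ?_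
      intro s hs
      rw [interior_Icc] at hs
      rw [hFψderiv]
      exact Real.sqrt_pos.2 (hfipos i s (Ioo_subset_Icc_self hs))
    have key : ∀ i : Fin d, ∃ ci : ℝ → ℝ, Continuous ci ∧ (∀ t, ci t ∈ Icc (cl i) (cu i)) ∧
        (∀ t, Fψ i (ci t) = Fψ i (x i) + τ t * (Fψ i (y i) - Fψ i (x i))) := by
      intro i
      set fK : ↥(Icc (cl i) (cu i)) → ℝ := fun s => Fψ i s.val with hfKdef
      have hfKcont : Continuous fK := (hψcoordcont i).comp continuous_subtype_val
      have hfKinj : Function.Injective fK := fun p q h =>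
        Subtype.ext ((hFψmono i).injOn p.2 q.2 h)
      have emb := (hfKcont.isClosedEmbedding hfKinj).isEmbedding
      set e : ↥(Icc (cl i) (cu i)) ≃ₜ ↑(range fK) := emb.toHomeomorph with hedef
      have hv_mem : ∀ t, Fψ i (x i) + τ t * (Fψ i (y i) - Fψ i (x i)) ∈ range fK := by
        intro t
        have hseg : Fψ i (x i) + τ t * (Fψ i (y i) - Fψ i (x i))
            ∈ segment ℝ (Fψ i (x i)) (Fψ i (y i)) :=
          ⟨1 - τ t, τ t, by linarith [(hτmem t).2], (hτmem t).1, by ring,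
            by simp only [smul_eq_mul]; ring⟩
        rw [segment_eq_uIcc] at hseg
        obtain ⟨ξ, hξ, hξeq⟩ := intermediate_value_uIcc ((hψcoordcont i).continuousOn) hseg
        exact ⟨⟨ξ, uIcc_subset_Icc (hx i) (hy i) hξ⟩, hξeq⟩
      refine ⟨fun t => (e.symm ⟨_, hv_mem t⟩ : ↥(Icc (cl i) (cu i))).val, ?_, ?_, ?_⟩
      · exact continuous_subtype_val.comp (e.symm.continuous.comp
          (Continuous.subtype_mk (continuous_const.add (hτcont.mul continuous_const)) _))
      · exact fun t => (e.symm ⟨_, hv_mem t⟩).2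
      · exact fun t => congrArg Subtype.val (e.apply_symm_apply ⟨_, hv_mem t⟩)
    choose ci hcicont hcimem hcieq using key
    have hinj : ∀ i, ∀ a ∈ Icc (cl i) (cu i), ∀ b ∈ Icc (cl i) (cu i),
        Fψ i a = Fψ i b → a = b := fun i a ha b hb h => (hFψmono i).injOn ha hb h
    refine ⟨fun t => (EuclideanSpace.equiv (Fin d) ℝ).symm (fun i => ci i t),
      ?_, ?_, ?_, ?_, ?_⟩
    · exact ((EuclideanSpace.equiv (Fin d) ℝ).symm.continuous).comp
        (continuous_pi fun i => hcicont i)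
    · exact fun t i => hcimem i t
    · ext i
      refine hinj i _ (hcimem i 0) _ (hx i) ?_
      rw [hcieq i 0, hτid 0 ⟨le_rfl, zero_le_one⟩]
      ring
    · ext i
      refine hinj i _ (hcimem i 1) _ (hy i) ?_
      rw [hcieq i 1, hτid 1 ⟨zero_le_one, le_rfl⟩]
      ring
    · intro s hs t ht
      ext i
      show Real.sqrt (α i) * Fψ i (ci i t) - Real.sqrt (α i) * Fψ i (ci i s)
        = (t - s) * (Real.sqrt (α i) * Fψ i (y i) - Real.sqrt (α i) * Fψ i (x i))
      rw [hcieq i t, hcieq i s, hτid s hs, hτid t ht]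
      ring
  have hupper : geodesicDist (φ '' Z) (φ x) (φ y)
      ≤ ENNReal.ofReal ‖psiMap α fi cl x - psiMap α fi cl y‖ := by
    set L : ℝ := ‖psiMap α fi cl x - psiMap α fi cl y‖ with hLdef
    have hL0 : 0 ≤ L := norm_nonneg _
    set γ₀ : ℝ → l2 := fun t => φ (c₀ t) with hγ₀def
    have hpath : IsPathIn (φ '' Z) (φ x) (φ y) γ₀ := by
      refine ⟨(hφcont.comp_continuous hc₀cont fun t => hc₀mem t).continuousOn,
        fun t _ => ⟨c₀ t, hc₀mem t, rfl⟩, ?_, ?_⟩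
      · show φ (c₀ 0) = φ x
        rw [hc₀0]
      · show φ (c₀ 1) = φ y
        rw [hc₀1]
    refine le_trans (iInf_le _
      (⟨γ₀, hpath⟩ : {γ : ℝ → l2 // IsPathIn (φ '' Z) (φ x) (φ y) γ})) ?_
    refine ENNReal.le_of_forall_pos_le_add fun η hη _ => ?_
    show (⨆ P : PathPartition, ENNReal.ofReal (chiSum γ₀ P)) ≤ _
    refine iSup_le fun P => ?_
    set ε : ℝ := (η : ℝ) / (L + 1) with hεdef
    have hηpos : (0:ℝ) < η := by exact_mod_cast hη
    have hεpos : 0 < ε := div_pos hηpos (by linarith)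
    obtain ⟨δ, hδpos, hδ⟩ := hloc ε hεpos
    have hUC := (isCompact_Icc (a := (0:ℝ)) (b := 1)).uniformContinuousOn_of_continuous
      hc₀cont.continuousOn
    rw [Metric.uniformContinuousOn_iff] at hUC
    obtain ⟨δ2, hδ2pos, hδ2⟩ := hUC δ hδpos
    obtain ⟨m, hm⟩ := exists_nat_gt (1/δ2)
    have hmR : (0:ℝ) < m := lt_trans (by positivity) hm
    have hmpos : 0 < m := by exact_mod_cast hmR
    have hminv : 1/(m:ℝ) < δ2 := by
      rw [div_lt_iff₀ hmR]
      rw [div_lt_iff₀ hδ2pos] at hm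
      linarith
    have hgap : ∀ s t : ℝ, s ∈ Icc (0:ℝ) 1 → t ∈ Icc (0:ℝ) 1 → |s - t| ≤ 1/m →
        ∀ i, |c₀ s i - c₀ t i| ≤ δ := by
      intro s t hs ht hst i
      have hd : dist s t < δ2 := by
        rw [Real.dist_eq]
        exact lt_of_le_of_lt hst hminv
      have h2 := hδ2 s hs t ht hd
      calc |c₀ s i - c₀ t i| = |(c₀ s - c₀ t) i| := by rw [hsub_apply]
        _ ≤ ‖c₀ s - c₀ t‖ := AKG.coord_abs_le_norm _ i
        _ = dist (c₀ s) (c₀ t) := (dist_eq_norm _ _).symm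
        _ ≤ δ := h2.le
    set P' := P.refine m hmpos with hP'def
    have hterm : ∀ j < P'.n, ‖γ₀ (P'.t (j+1)) - γ₀ (P'.t j)‖
        ≤ Real.sqrt (1+ε) * ((P'.t (j+1) - P'.t j) * L) := by
      intro j hj
      have ht1 : P'.t (j+1) ∈ Icc (0:ℝ) 1 := P'.mem_unit (Nat.succ_le_of_lt hj)
      have ht0 : P'.t j ∈ Icc (0:ℝ) 1 := P'.mem_unit hj.le
      have hgapj : P'.t (j+1) - P'.t j ≤ 1/m := P.refine_gap m hmpos hj
      have hmono : P'.t j ≤ P'.t (j+1) := P'.mono j hj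
      have hcoord : ∀ i, |c₀ (P'.t (j+1)) i - c₀ (P'.t j) i| ≤ δ :=
        hgap _ _ ht1 ht0 (by rw [abs_of_nonneg (by linarith)]; exact hgapj)
      have h := (hδ _ (hc₀mem _) _ (hc₀mem _) hcoord).2
      have hψd : psiMap α fi cl (c₀ (P'.t (j+1))) - psiMap α fi cl (c₀ (P'.t j))
          = (P'.t (j+1) - P'.t j) • (psiMap α fi cl y - psiMap α fi cl x) :=
        hc₀ψ _ ht0 _ ht1
      calc ‖γ₀ (P'.t (j+1)) - γ₀ (P'.t j)‖
          ≤ Real.sqrt (1+ε) * ‖psiMap α fi cl (c₀ (P'.t (j+1)))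
              - psiMap α fi cl (c₀ (P'.t j))‖ := h
        _ = Real.sqrt (1+ε) * ((P'.t (j+1) - P'.t j) * L) := by
            rw [hψd, norm_smul, Real.norm_eq_abs, abs_of_nonneg (by linarith),
              norm_sub_rev]
    have hchi' : chiSum γ₀ P' ≤ Real.sqrt (1+ε) * L := by
      calc chiSum γ₀ P'
          ≤ ∑ j ∈ Finset.range P'.n, Real.sqrt (1+ε) * ((P'.t (j+1) - P'.t j) * L) :=
            Finset.sum_le_sum fun j hj => hterm j (Finset.mem_range.1 hj)
        _ = Real.sqrt (1+ε) * ((∑ j ∈ Finset.range P'.n, (P'.t (j+1) - P'.t j)) * L) := by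
            rw [← Finset.mul_sum, ← Finset.sum_mul]
        _ = Real.sqrt (1+ε) * L := by
            rw [Finset.sum_range_sub (fun j => P'.t j), P'.last, P'.first]
            ring
    have hsq : Real.sqrt (1+ε) ≤ 1 + ε := by
      nlinarith [Real.sq_sqrt (by linarith : (0:ℝ) ≤ 1+ε), Real.sqrt_nonneg (1+ε),
        sq_nonneg (Real.sqrt (1+ε) - 1)]
    have hεL : ε * L ≤ η := by
      have h1 : ε * L ≤ ε * (L + 1) := mul_le_mul_of_nonneg_left (by linarith) hεpos.le
      have h2 : ε * (L + 1) = η := by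
        rw [hεdef, div_mul_cancel₀ _ (by linarith : (L:ℝ) + 1 ≠ 0)]
      linarith
    have hreal : chiSum γ₀ P ≤ L + η := by
      have h1 := chiSum_le_refine γ₀ P m hmpos
      have h2 : Real.sqrt (1+ε) * L ≤ L + ε * L := by
        have := mul_le_mul_of_nonneg_right hsq hL0
        linarith [this]
      have : chiSum γ₀ P' ≤ L + η := by linarith
      calc chiSum γ₀ P ≤ chiSum γ₀ P' := h1
        _ ≤ L + η := this
    calc ENNReal.ofReal (chiSum γ₀ P) ≤ ENNReal.ofReal (L + η) :=
        ENNReal.ofReal_le_ofReal hreal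
      _ ≤ ENNReal.ofReal L + ENNReal.ofReal η := ENNReal.ofReal_add_le
      _ = ENNReal.ofReal L + η := by rw [ENNReal.ofReal_coe_nnreal]
  have hlower : ENNReal.ofReal ‖psiMap α fi cl x - psiMap α fi cl y‖
      ≤ geodesicDist (φ '' Z) (φ x) (φ y) := by
    set L : ℝ := ‖psiMap α fi cl x - psiMap α fi cl y‖ with hLdef
    have hL0 : 0 ≤ L := norm_nonneg _
    show _ ≤ ⨅ γ : {γ : ℝ → l2 // IsPathIn (φ '' Z) (φ x) (φ y) γ}, pathLength γ.val
    refine le_iInf fun ⟨γ, hγ⟩ => ?_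
    -- clamp
    set τ : ℝ → ℝ := fun t => max 0 (min 1 t) with hτdef
    have hτcont : Continuous τ := continuous_const.max (continuous_const.min continuous_id)
    have hτmem : ∀ t, τ t ∈ Icc (0:ℝ) 1 :=
      fun t => ⟨le_max_left _ _, max_le zero_le_one (min_le_left _ _)⟩
    have hτid : ∀ t ∈ Icc (0:ℝ) 1, τ t = t := by
      intro t ht
      rw [hτdef]
      simp only
      rw [min_eq_right ht.2, max_eq_right ht.1]
    -- inverse of φ along the path
    haveI : CompactSpace ↥Z := isCompact_iff_compactSpace.1 hZcompact
    set fZ : ↥Z → l2 := Z.restrict φ with hfZdef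
    have hfZcont : Continuous fZ := hφcont.restrict
    have hfZinj : Function.Injective fZ := fun p q h => Subtype.ext (hφinj p.2 q.2 h)
    have embZ := (hfZcont.isClosedEmbedding hfZinj).isEmbedding
    set eZ : ↥Z ≃ₜ ↑(range fZ) := embZ.toHomeomorph with heZdef
    have hγτcont : Continuous fun t => γ (τ t) :=
      hγ.1.comp_continuous hτcont fun t => hτmem t
    have hγmem : ∀ t : ℝ, γ (τ t) ∈ range fZ := by
      intro t
      rw [hfZdef, show range (Z.restrict φ) = φ '' Z from (Set.image_eq_range φ Z).symm]
      exact hγ.2.1 (τ t) (hτmem t)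
    set c : ℝ → EuclideanSpace ℝ (Fin d) :=
      fun t => ((eZ.symm ⟨γ (τ t), hγmem t⟩ : ↥Z) : EuclideanSpace ℝ (Fin d)) with hcdef
    have hccont : Continuous c := continuous_subtype_val.comp
      (eZ.symm.continuous.comp (Continuous.subtype_mk hγτcont _))
    have hcmem : ∀ t, c t ∈ Z := fun t => (eZ.symm ⟨γ (τ t), hγmem t⟩).2
    have hφc : ∀ t, φ (c t) = γ (τ t) :=
      fun t => congrArg Subtype.val (eZ.apply_symm_apply ⟨γ (τ t), hγmem t⟩)
    have hc0 : c 0 = x := by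
      refine hφinj (hcmem 0) hx ?_
      rw [hφc 0, hτid 0 ⟨le_rfl, zero_le_one⟩, hγ.2.2.1]
    have hc1 : c 1 = y := by
      refine hφinj (hcmem 1) hy ?_
      rw [hφc 1, hτid 1 ⟨zero_le_one, le_rfl⟩, hγ.2.2.2]
    -- epsilon argument
    refine ENNReal.le_of_forall_pos_le_add fun η hη _ => ?_
    have hηpos : (0:ℝ) < η := by exact_mod_cast hη
    set ε : ℝ := (η : ℝ) / (L + 1) with hεdef
    have hεpos : 0 < ε := div_pos hηpos (by linarith)
    obtain ⟨δ, hδpos, hδ⟩ := hloc ε hεpos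
    have hUC := (isCompact_Icc (a := (0:ℝ)) (b := 1)).uniformContinuousOn_of_continuous
      hccont.continuousOn
    rw [Metric.uniformContinuousOn_iff] at hUC
    obtain ⟨δ2, hδ2pos, hδ2⟩ := hUC δ hδpos
    obtain ⟨n, hn⟩ := exists_nat_gt (1/δ2)
    have hnR : (0:ℝ) < n := lt_trans (by positivity) hn
    have hnpos : 0 < n := by exact_mod_cast hnR
    have hninv : 1/(n:ℝ) < δ2 := by
      rw [div_lt_iff₀ hnR]
      rw [div_lt_iff₀ hδ2pos] at hn
      linarith
    -- uniform partition
    set Pu : PathPartition :=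
      ⟨n, fun k => ((min k n : ℕ) : ℝ)/n, by simp,
        by
          show ((min n n : ℕ) : ℝ)/n = 1
          rw [Nat.min_self]
          exact div_self (ne_of_gt hnR),
        by
          intro k hk
          show ((min k n : ℕ) : ℝ)/n ≤ ((min (k+1) n : ℕ) : ℝ)/n
          rw [Nat.min_eq_left hk.le, Nat.min_eq_left hk]
          gcongr
          exact_mod_cast Nat.le_succ k⟩ with hPudef
    have hPut : ∀ k, k ≤ n → Pu.t k = (k:ℝ)/n := by
      intro k hk
      show ((min k n : ℕ) : ℝ)/n = (k:ℝ)/n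
      rw [Nat.min_eq_left hk]
    have hmemt : ∀ k, k ≤ n → Pu.t k ∈ Icc (0:ℝ) 1 := fun k hk => Pu.mem_unit hk
    have hterm : ∀ k < n, Real.sqrt (1-ε) * ‖psiMap α fi cl (c (Pu.t (k+1)))
        - psiMap α fi cl (c (Pu.t k))‖ ≤ ‖γ (Pu.t (k+1)) - γ (Pu.t k)‖ := by
      intro k hk
      have ht1 : Pu.t (k+1) ∈ Icc (0:ℝ) 1 := hmemt (k+1) hk
      have ht0 : Pu.t k ∈ Icc (0:ℝ) 1 := hmemt k hk.le
      have hgapk : Pu.t (k+1) - Pu.t k ≤ 1/n := by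
        rw [hPut (k+1) hk, hPut k hk.le]
        push_cast
        rw [div_sub_div_same]
        gcongr
        · linarith
      have hmono : Pu.t k ≤ Pu.t (k+1) := Pu.mono k hk
      have hcoord : ∀ i, |c (Pu.t (k+1)) i - c (Pu.t k) i| ≤ δ := by
        intro i
        have hd : dist (Pu.t (k+1)) (Pu.t k) < δ2 := by
          rw [Real.dist_eq, abs_of_nonneg (by linarith)]
          exact lt_of_le_of_lt hgapk hninv
        have h2 := hδ2 _ ht1 _ ht0 hd
        calc |c (Pu.t (k+1)) i - c (Pu.t k) i|
            = |(c (Pu.t (k+1)) - c (Pu.t k)) i| := by rw [hsub_apply]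
          _ ≤ ‖c (Pu.t (k+1)) - c (Pu.t k)‖ := AKG.coord_abs_le_norm _ i
          _ = dist (c (Pu.t (k+1))) (c (Pu.t k)) := (dist_eq_norm _ _).symm
          _ ≤ δ := h2.le
      have h := (hδ _ (hcmem _) _ (hcmem _) hcoord).1
      calc Real.sqrt (1-ε) * ‖psiMap α fi cl (c (Pu.t (k+1))) - psiMap α fi cl (c (Pu.t k))‖
          ≤ ‖φ (c (Pu.t (k+1))) - φ (c (Pu.t k))‖ := h
        _ = ‖γ (Pu.t (k+1)) - γ (Pu.t k)‖ := by
            rw [hφc, hφc, hτid _ ht1, hτid _ ht0]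
    have htel : ‖psiMap α fi cl y - psiMap α fi cl x‖
        ≤ ∑ k ∈ Finset.range n, ‖psiMap α fi cl (c (Pu.t (k+1)))
            - psiMap α fi cl (c (Pu.t k))‖ := by
      have hsum := Finset.sum_range_sub (fun k => psiMap α fi cl (c (Pu.t k))) n
      have hPn : Pu.t n = 1 := Pu.last
      have hP0 : Pu.t 0 = 0 := Pu.first
      calc ‖psiMap α fi cl y - psiMap α fi cl x‖
          = ‖∑ k ∈ Finset.range n, (psiMap α fi cl (c (Pu.t (k+1)))
              - psiMap α fi cl (c (Pu.t k)))‖ := by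
            rw [hsum, hPn, hP0, hc1, hc0]
        _ ≤ ∑ k ∈ Finset.range n, ‖psiMap α fi cl (c (Pu.t (k+1)))
              - psiMap α fi cl (c (Pu.t k))‖ := norm_sum_le _ _
    have hchi : Real.sqrt (1-ε) * L ≤ chiSum γ Pu := by
      have h1 : Real.sqrt (1-ε) * L
          ≤ Real.sqrt (1-ε) * ∑ k ∈ Finset.range n, ‖psiMap α fi cl (c (Pu.t (k+1)))
              - psiMap α fi cl (c (Pu.t k))‖ := by
        refine mul_le_mul_of_nonneg_left ?_ (Real.sqrt_nonneg _)
        rw [hLdef, norm_sub_rev]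
        exact htel
      calc Real.sqrt (1-ε) * L
          ≤ Real.sqrt (1-ε) * ∑ k ∈ Finset.range n, ‖psiMap α fi cl (c (Pu.t (k+1)))
              - psiMap α fi cl (c (Pu.t k))‖ := h1
        _ = ∑ k ∈ Finset.range n, Real.sqrt (1-ε) * ‖psiMap α fi cl (c (Pu.t (k+1)))
              - psiMap α fi cl (c (Pu.t k))‖ := Finset.mul_sum _ _ _
        _ ≤ ∑ k ∈ Finset.range n, ‖γ (Pu.t (k+1)) - γ (Pu.t k)‖ :=
            Finset.sum_le_sum fun k hk => hterm k (Finset.mem_range.1 hk)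
        _ = chiSum γ Pu := rfl
    -- conclude
    have hsq : 1 - ε ≤ Real.sqrt (1-ε) := by
      rcases le_or_gt (1-ε) 0 with h | h
      · exact le_trans h (Real.sqrt_nonneg _)
      · have hs1 : Real.sqrt (1-ε) ≤ 1 := Real.sqrt_le_one.2 (by linarith)
        calc 1 - ε = Real.sqrt (1-ε) ^ 2 := (Real.sq_sqrt h.le).symm
          _ = Real.sqrt (1-ε) * Real.sqrt (1-ε) := sq (Real.sqrt (1-ε))
          _ ≤ 1 * Real.sqrt (1-ε) :=
              mul_le_mul_of_nonneg_right hs1 (Real.sqrt_nonneg _)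
          _ = Real.sqrt (1-ε) := one_mul _
    have hεL : ε * L ≤ η := by
      have h1 : ε * L ≤ ε * (L + 1) := mul_le_mul_of_nonneg_left (by linarith) hεpos.le
      have h2 : ε * (L + 1) = η := by
        rw [hεdef, div_mul_cancel₀ _ (by linarith : (L:ℝ) + 1 ≠ 0)]
      linarith
    have hLle : L ≤ chiSum γ Pu + η := by
      have h3 : (1-ε) * L ≤ Real.sqrt (1-ε) * L := mul_le_mul_of_nonneg_right hsq hL0
      nlinarith
    calc ENNReal.ofReal L ≤ ENNReal.ofReal (chiSum γ Pu + η) :=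
        ENNReal.ofReal_le_ofReal hLle
      _ ≤ ENNReal.ofReal (chiSum γ Pu) + ENNReal.ofReal η := ENNReal.ofReal_add_le
      _ = ENNReal.ofReal (chiSum γ Pu) + η := by rw [ENNReal.ofReal_coe_nnreal]
      _ ≤ pathLength γ + η := by
          gcongr
          exact le_iSup (fun P : PathPartition => ENNReal.ofReal (chiSum γ P)) Pu
  exact le_antisymm hupper hlower
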